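/- arXiv:0705.4005 — 6 statements merged into one kernel-verified Lean document; each statement's English description precedes it below -/
import Mathlib

section
/- For every continuously differentiable function v on [0,1], the squared weighted L² norm ∫₀¹ x²v(x)² dx is bounded by (1/2)∫₀¹ x²v'(x)² dx + v(1)². -/
open MeasureTheory Set

/-- Lemma 1, first inequality: for `v ∈ C¹([0,1])`,
`∫₀¹ x² v(x)² dx ≤ (1/2) ∫₀¹ x² v'(x)² dx + v(1)²`. -/
theorem weighted_poincare (v : ℝ → ℝ) (hv : ContDiffOn ℝ 1 v (Set.Icc 0 1)) :
    (∫ x in (0:ℝ)..1, x ^ 2 * (v x) ^ 2) ≤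
      (1 / 2) * (∫ x in (0:ℝ)..1, x ^ 2 * (derivWithin v (Set.Icc 0 1) x) ^ 2) + (v 1) ^ 2 := by
  set w : ℝ → ℝ := fun x => derivWithin v (Set.Icc 0 1) x with hw
  have huIcc : Set.uIcc (0:ℝ) 1 = Set.Icc 0 1 := Set.uIcc_of_le zero_le_one
  have hcv : ContinuousOn v (Set.Icc 0 1) := hv.continuousOn
  have hcw : ContinuousOn w (Set.Icc 0 1) :=
    hv.continuousOn_derivWithin (uniqueDiffOn_Icc zero_lt_one) le_rfl
  -- derivative at interior points
  have hd : ∀ x ∈ Set.Ioo (0:ℝ) 1, HasDerivAt v (w x) x := by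
    intro x hx
    have hmem : Set.Icc (0:ℝ) 1 ∈ nhds x := Icc_mem_nhds hx.1 hx.2
    have hdw : HasDerivWithinAt v (w x) (Set.Icc 0 1) x :=
      ((hv.differentiableOn one_ne_zero) x (Set.Ioo_subset_Icc_self hx)).hasDerivWithinAt
    exact hdw.hasDerivAt hmem
  -- integrability facts
  have hint1 : IntervalIntegrable (fun x => x ^ 2 * (v x) ^ 2) volume 0 1 := by
    apply ContinuousOn.intervalIntegrable
    rw [huIcc]
    exact (continuousOn_pow 2).mul (hcv.pow 2)
  have hint2 : IntervalIntegrable (fun x => (2:ℝ)/3 * (x ^ 3 * (v x * w x))) volume 0 1 := by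
    apply ContinuousOn.intervalIntegrable
    rw [huIcc]
    exact continuousOn_const.mul ((continuousOn_pow 3).mul (hcv.mul hcw))
  have hint3 : IntervalIntegrable (fun x => x ^ 2 * (w x) ^ 2) volume 0 1 := by
    apply ContinuousOn.intervalIntegrable
    rw [huIcc]
    exact (continuousOn_pow 2).mul (hcw.pow 2)
  -- integration by parts identity
  have key : (∫ x in (0:ℝ)..1, (x ^ 2 * (v x) ^ 2 + (2:ℝ)/3 * (x ^ 3 * (v x * w x))))
      = 1/3 * (v 1) ^ 2 := by
    have := intervalIntegral.integral_eq_sub_of_hasDeriv_right_of_le (f := fun x => x ^ 3 / 3 * (v x) ^ 2)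
      (f' := fun x => x ^ 2 * (v x) ^ 2 + (2:ℝ)/3 * (x ^ 3 * (v x * w x)))
      zero_le_one
      (by exact (((continuousOn_pow 3).div_const 3).mul (hcv.pow 2)))
      (by
        intro x hx
        have hF : HasDerivAt (fun x => x ^ 3 / 3 * (v x) ^ 2)
            (x ^ 2 * (v x) ^ 2 + (2:ℝ)/3 * (x ^ 3 * (v x * w x))) x := by
          have h1 : HasDerivAt (fun x : ℝ => x ^ 3 / 3) (x ^ 2) x := by
            have := (hasDerivAt_pow 3 x).div_const 3
            refine this.congr_deriv ?_
            norm_num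
          have h2 : HasDerivAt (fun y => (v y) ^ 2) (2 * v x ^ 1 * w x) x :=
            (hd x hx).pow 2
          have := h1.mul h2
          refine this.congr_deriv ?_
          ring
        exact hF.hasDerivWithinAt.mono_of_mem_nhdsWithin (by
          exact mem_nhdsWithin_of_mem_nhds (Icc_mem_nhds hx.1 hx.2) )
        )
      (hint1.add hint2)
    rw [this]
    norm_num
  rw [intervalIntegral.integral_add hint1 hint2] at key
  -- pointwise bound integrated
  have mono : (∫ x in (0:ℝ)..1, -((2:ℝ) * (x ^ 3 * (v x * w x))))
      ≤ ∫ x in (0:ℝ)..1, (2 * (x ^ 2 * (v x) ^ 2) + 1/2 * (x ^ 2 * (w x) ^ 2)) := by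
    apply intervalIntegral.integral_mono_on zero_le_one
    · apply ContinuousOn.intervalIntegrable
      rw [huIcc]
      exact (continuousOn_const.mul ((continuousOn_pow 3).mul (hcv.mul hcw))).neg
    · exact (hint1.const_mul 2).add (hint3.const_mul (1/2))
    · intro x hx
      have h1 : x ^ 2 ≤ 1 := by nlinarith [hx.1, hx.2]
      have h2 : 0 ≤ (1 - x ^ 2) * (x * w x) ^ 2 :=
        mul_nonneg (by linarith) (sq_nonneg _)
      nlinarith [sq_nonneg (2 * x * v x + x ^ 2 * w x), h2]
  rw [intervalIntegral.integral_neg] at mono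
  rw [intervalIntegral.integral_add (hint1.const_mul 2) (hint3.const_mul (1/2))] at mono
  rw [intervalIntegral.integral_const_mul, intervalIntegral.integral_const_mul,
    intervalIntegral.integral_const_mul] at mono
  rw [intervalIntegral.integral_const_mul] at key
  linarith
end

section
/- For every v ∈ C¹([0,1]) and every ε > 0, one has v(1)² ≤ ε ∫₀¹ x² v'(x)² dx + (3 + 1/ε) ∫₀¹ x² v(x)² dx. -/
open MeasureTheory Set

/-- Lemma 1, second inequality: for `v ∈ C¹([0,1])` and `ε > 0`,
`v(1)² ≤ ε ∫₀¹ x² v'(x)² dx + (3 + 1/ε) ∫₀¹ x² v(x)² dx`. -/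
theorem trace_estimate (v : ℝ → ℝ) (hv : ContDiffOn ℝ 1 v (Set.Icc 0 1))
    (ε : ℝ) (hε : 0 < ε) :
    (v 1) ^ 2 ≤ ε * (∫ x in (0:ℝ)..1, x ^ 2 * (derivWithin v (Set.Icc 0 1) x) ^ 2)
      + (3 + 1 / ε) * (∫ x in (0:ℝ)..1, x ^ 2 * (v x) ^ 2) := by
  set D := derivWithin v (Set.Icc 0 1) with hD
  have hUD : UniqueDiffOn ℝ (Set.Icc (0:ℝ) 1) := uniqueDiffOn_Icc (by norm_num)
  have hvd : DifferentiableOn ℝ v (Set.Icc 0 1) := hv.differentiableOn one_ne_zero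
  have hDc : ContinuousOn D (Set.Icc 0 1) := hv.continuousOn_derivWithin hUD le_rfl
  have hvc : ContinuousOn v (Set.Icc 0 1) := hv.continuousOn
  set G' : ℝ → ℝ := fun x => 3 * x ^ 2 * (v x) ^ 2 + x ^ 3 * (2 * v x * D x) with hG'
  have key : ∀ x ∈ Set.Ioo (0:ℝ) 1,
      HasDerivWithinAt (fun x => x ^ 3 * (v x) ^ 2) (G' x) (Set.Ioi x) x := by
    intro x hx
    have hmem : Set.Icc (0:ℝ) 1 ∈ nhds x := Icc_mem_nhds hx.1 hx.2
    have hvx : HasDerivAt v (D x) x :=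
      ((hvd x (Set.Ioo_subset_Icc_self hx)).hasDerivWithinAt).hasDerivAt hmem
    have h1 : HasDerivAt (fun x : ℝ => x ^ 3) (3 * x ^ 2) x := by
      simpa using hasDerivAt_pow 3 x
    have h2 : HasDerivAt (fun x => (v x) ^ 2) (2 * v x * D x) x := by
      simpa using hvx.fun_pow 2
    exact (h1.mul h2).hasDerivWithinAt
  have hG'c : ContinuousOn G' (Set.Icc 0 1) := by
    apply ContinuousOn.add
    · exact (continuousOn_const.mul (continuousOn_pow 2)).mul (hvc.pow 2)
    · exact (continuousOn_pow 3).mul ((continuousOn_const.mul hvc).mul hDc)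
  have hG'int : IntervalIntegrable G' MeasureTheory.volume 0 1 :=
    hG'c.intervalIntegrable_of_Icc (by norm_num)
  have hgc : ContinuousOn (fun x => x ^ 3 * (v x) ^ 2) (Set.Icc 0 1) :=
    (continuousOn_pow 3).mul (hvc.pow 2)
  have hFTC : ∫ x in (0:ℝ)..1, G' x = (v 1) ^ 2 := by
    rw [intervalIntegral.integral_eq_sub_of_hasDeriv_right_of_le (by norm_num) hgc key hG'int]
    norm_num
  set H : ℝ → ℝ := fun x => ε * (x ^ 2 * D x ^ 2) + (3 + 1 / ε) * (x ^ 2 * (v x) ^ 2)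
    with hH
  have hHc : ContinuousOn H (Set.Icc 0 1) := by
    apply ContinuousOn.add
    · exact continuousOn_const.mul ((continuousOn_pow 2).mul (hDc.pow 2))
    · exact continuousOn_const.mul ((continuousOn_pow 2).mul (hvc.pow 2))
  have hHint : IntervalIntegrable H MeasureTheory.volume 0 1 :=
    hHc.intervalIntegrable_of_Icc (by norm_num)
  have hpt : ∀ x ∈ Set.Icc (0:ℝ) 1, G' x ≤ H x := by
    intro x hx
    have hx4 : x ^ 4 ≤ x ^ 2 := pow_le_pow_of_le_one hx.1 hx.2 (by norm_num)
    have hkey : 2 * (x ^ 3 * (v x * D x)) * ε ≤ ε ^ 2 * (x ^ 2 * D x ^ 2) + x ^ 2 * (v x) ^ 2 := by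
      nlinarith [mul_nonneg (sq_nonneg (ε * x * D x - v x)) (sq_nonneg x),
        mul_le_mul_of_nonneg_left hx4 (mul_nonneg (sq_nonneg ε) (sq_nonneg (D x)))]
    have heq : (ε * (x ^ 2 * D x ^ 2) + (1 / ε) * (x ^ 2 * (v x) ^ 2)) * ε
        = ε ^ 2 * (x ^ 2 * D x ^ 2) + x ^ 2 * (v x) ^ 2 := by
      field_simp
    have h2 : 2 * (x ^ 3 * (v x * D x)) ≤ ε * (x ^ 2 * D x ^ 2) + (1 / ε) * (x ^ 2 * (v x) ^ 2) := by
      rw [← mul_le_mul_iff_left₀ hε, heq]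
      exact hkey
    simp only [hG', hH]
    nlinarith [h2]
  have hmono : ∫ x in (0:ℝ)..1, G' x ≤ ∫ x in (0:ℝ)..1, H x := by
    apply intervalIntegral.integral_mono_on (by norm_num) hG'int hHint
    intro x hx; exact hpt x hx
  have hsplit : ∫ x in (0:ℝ)..1, H x
      = ε * (∫ x in (0:ℝ)..1, x ^ 2 * D x ^ 2)
        + (3 + 1 / ε) * (∫ x in (0:ℝ)..1, x ^ 2 * (v x) ^ 2) := by
    have h1 : IntervalIntegrable (fun x => ε * (x ^ 2 * D x ^ 2)) MeasureTheory.volume 0 1 :=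
      (continuousOn_const.mul ((continuousOn_pow 2).mul (hDc.pow 2))).intervalIntegrable_of_Icc
        (by norm_num)
    have h2 : IntervalIntegrable (fun x => (3 + 1 / ε) * (x ^ 2 * (v x) ^ 2))
        MeasureTheory.volume 0 1 :=
      (continuousOn_const.mul ((continuousOn_pow 2).mul (hvc.pow 2))).intervalIntegrable_of_Icc
        (by norm_num)
    rw [hH]
    rw [intervalIntegral.integral_add h1 h2, intervalIntegral.integral_const_mul,
      intervalIntegral.integral_const_mul]
  calc (v 1) ^ 2 = ∫ x in (0:ℝ)..1, G' x := hFTC.symm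
    _ ≤ ∫ x in (0:ℝ)..1, H x := hmono
    _ = _ := by rw [hsplit]
end

section
/- For every v ∈ C¹([0,1]), one has |v(1)| ≤ 2‖v‖₁, where ‖v‖₁² = ∫₀¹ x²v(x)² dx + ∫₀¹ x²v'(x)² dx. -/
open MeasureTheory Set

/-- Lemma 1, third inequality: for `v ∈ C¹([0,1])`, `|v(1)| ≤ 2‖v‖₁`, where
`‖v‖₁² = ∫₀¹ x² v(x)² dx + ∫₀¹ x² v'(x)² dx`. -/
theorem trace_bound_V_norm (v : ℝ → ℝ) (hv : ContDiffOn ℝ 1 v (Set.Icc 0 1)) :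
    |v 1| ≤ 2 * Real.sqrt ((∫ x in (0:ℝ)..1, x ^ 2 * (v x) ^ 2)
      + ∫ x in (0:ℝ)..1, x ^ 2 * (derivWithin v (Set.Icc 0 1) x) ^ 2) := by
  set u : ℝ → ℝ := fun x => derivWithin v (Set.Icc 0 1) x with hu
  have hud : UniqueDiffOn ℝ (Icc (0:ℝ) 1) := uniqueDiffOn_Icc one_pos
  have hvc : ContinuousOn v (Icc 0 1) := hv.continuousOn
  have huc : ContinuousOn u (Icc 0 1) := hv.continuousOn_derivWithin hud le_rfl
  have hderiv : ∀ x ∈ Icc (0:ℝ) 1, HasDerivWithinAt v (u x) (Icc 0 1) x := fun x hx =>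
    (hv.differentiableOn one_ne_zero x hx).hasDerivWithinAt
  have hcx : ContinuousOn (fun x : ℝ => x) (Icc 0 1) := continuousOn_id
  have hc1 : ContinuousOn (fun x : ℝ => 3*x^2*(v x)^2 + 2*x^3*(v x)*(u x)) (Icc 0 1) := by
    fun_prop
  have hc2 : ContinuousOn (fun x : ℝ => 4*(x^2*(v x)^2 + x^2*(u x)^2)) (Icc 0 1) := by
    fun_prop
  have hint1 : IntervalIntegrable (fun x : ℝ => 3*x^2*(v x)^2 + 2*x^3*(v x)*(u x))
      volume 0 1 := by
    apply ContinuousOn.intervalIntegrable; rwa [uIcc_of_le zero_le_one]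
  have hint2 : IntervalIntegrable (fun x : ℝ => 4*(x^2*(v x)^2 + x^2*(u x)^2))
      volume 0 1 := by
    apply ContinuousOn.intervalIntegrable; rwa [uIcc_of_le zero_le_one]
  have hintA : IntervalIntegrable (fun x : ℝ => x^2*(v x)^2) volume 0 1 := by
    apply ContinuousOn.intervalIntegrable; rw [uIcc_of_le zero_le_one]; fun_prop
  have hintB : IntervalIntegrable (fun x : ℝ => x^2*(u x)^2) volume 0 1 := by
    apply ContinuousOn.intervalIntegrable; rw [uIcc_of_le zero_le_one]; fun_prop
  have hFTC : (∫ x in (0:ℝ)..1, (3*x^2*(v x)^2 + 2*x^3*(v x)*(u x)))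
      = (v 1)^2 := by
    have h := intervalIntegral.integral_eq_sub_of_hasDeriv_right_of_le
      (f := fun x : ℝ => x^3*(v x)^2)
      (f' := fun x : ℝ => 3*x^2*(v x)^2 + 2*x^3*(v x)*(u x))
      zero_le_one (by fun_prop) ?_ hint1
    · simpa using h
    · intro x hx
      have hx' : x ∈ Icc (0:ℝ) 1 := Ioo_subset_Icc_self hx
      have h1 : HasDerivAt v (u x) x :=
        (hderiv x hx').hasDerivAt (Icc_mem_nhds hx.1 hx.2)
      have h2 : HasDerivAt (fun y : ℝ => y^3*(v y)^2)
          (3*x^2*(v x)^2 + 2*x^3*(v x)*(u x)) x := by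
        have := (hasDerivAt_pow 3 x).mul (h1.pow 2)
        refine this.congr_deriv ?_
        simp only [Pi.pow_apply]
        push_cast
        ring
      exact h2.hasDerivWithinAt
  have hmono : (∫ x in (0:ℝ)..1, (3*x^2*(v x)^2 + 2*x^3*(v x)*(u x)))
      ≤ ∫ x in (0:ℝ)..1, 4*(x^2*(v x)^2 + x^2*(u x)^2) := by
    apply intervalIntegral.integral_mono_on zero_le_one hint1 hint2
    intro x hx
    have h1 : (0:ℝ) ≤ 1 - x^2 := by nlinarith [hx.1, hx.2]
    have h2 : (0:ℝ) ≤ (x * u x)^2 * (1 - x^2) := mul_nonneg (sq_nonneg _) h1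
    nlinarith [sq_nonneg (x * v x - x^2 * u x), sq_nonneg (x * u x), h2]
  have hsplit : (∫ x in (0:ℝ)..1, 4*(x^2*(v x)^2 + x^2*(u x)^2))
      = 4 * ((∫ x in (0:ℝ)..1, x^2*(v x)^2) + ∫ x in (0:ℝ)..1, x^2*(u x)^2) := by
    rw [intervalIntegral.integral_const_mul, intervalIntegral.integral_add hintA hintB]
  have h4 : (v 1)^2 ≤ 4 * ((∫ x in (0:ℝ)..1, x^2*(v x)^2) + ∫ x in (0:ℝ)..1, x^2*(u x)^2) := by
    nlinarith [hFTC, hmono, hsplit]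
  calc |v 1| = Real.sqrt ((v 1)^2) := (Real.sqrt_sq_eq_abs _).symm
    _ ≤ Real.sqrt (4 * ((∫ x in (0:ℝ)..1, x^2*(v x)^2) + ∫ x in (0:ℝ)..1, x^2*(u x)^2)) :=
        Real.sqrt_le_sqrt h4
    _ = 2 * Real.sqrt ((∫ x in (0:ℝ)..1, x^2*(v x)^2) + ∫ x in (0:ℝ)..1, x^2*(u x)^2) := by
        rw [show (4:ℝ) = 2^2 by norm_num, Real.sqrt_mul (by positivity),
          Real.sqrt_sq (by norm_num)]
end

section
/- For every v ∈ C¹([0,1]) and every x ∈ [0,1], |x v(x)| ≤ √5 ‖v‖₁, where ‖v‖₁² = ∫₀¹ x²v² dx + ∫₀¹ x²(v')² dx. -/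
open MeasureTheory Set

/-- Lemma 1, fourth inequality: for `v ∈ C¹([0,1])` and `x ∈ [0,1]`,
`|x v(x)| ≤ √5 ‖v‖₁`, where `‖v‖₁² = ∫₀¹ x² v² dx + ∫₀¹ x² (v')² dx`. -/
theorem pointwise_bound_V_norm (v : ℝ → ℝ) (hv : ContDiffOn ℝ 1 v (Set.Icc 0 1))
    (x : ℝ) (hx : x ∈ Set.Icc (0:ℝ) 1) :
    |x * v x| ≤ Real.sqrt 5 * Real.sqrt ((∫ y in (0:ℝ)..1, y ^ 2 * (v y) ^ 2)
      + ∫ y in (0:ℝ)..1, y ^ 2 * (derivWithin v (Set.Icc 0 1) y) ^ 2) := by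
  obtain ⟨hx0, hx1⟩ := hx
  set d := derivWithin v (Set.Icc 0 1) with hd_def
  have hvc : ContinuousOn v (Icc 0 1) := hv.continuousOn
  have hdc : ContinuousOn d (Icc 0 1) :=
    hv.continuousOn_derivWithin (uniqueDiffOn_Icc one_pos) le_rfl
  set A := ∫ y in (0:ℝ)..1, y ^ 2 * (v y) ^ 2 with hA_def
  set B := ∫ y in (0:ℝ)..1, y ^ 2 * (d y) ^ 2 with hB_def
  -- pointwise derivative fact on the interior
  have hderiv : ∀ t ∈ Ioo (0:ℝ) 1, HasDerivAt v (d t) t := by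
    intro t ht
    have hmem : Icc (0:ℝ) 1 ∈ nhds t := Icc_mem_nhds ht.1 ht.2
    exact ((hv.differentiableOn one_ne_zero t
      (Ioo_subset_Icc_self ht)).hasDerivWithinAt).hasDerivAt hmem
  -- continuity of the integrands
  have hsub : Icc x 1 ⊆ Icc (0:ℝ) 1 := Icc_subset_Icc hx0 le_rfl
  have hg1c : ContinuousOn (fun t => 2*t*(v t)^2 + t^2*(2*(v t)*(d t))) (Icc 0 1) := by
    apply ContinuousOn.add
    · exact (continuousOn_const.mul continuousOn_id).mul (hvc.pow 2)
    · exact (continuousOn_id.pow 2).mul ((continuousOn_const.mul hvc).mul hdc)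
  have hg2c : ContinuousOn (fun t => 3*t^2*(v t)^2 + t^3*(2*(v t)*(d t))) (Icc 0 1) := by
    apply ContinuousOn.add
    · exact (continuousOn_const.mul (continuousOn_id.pow 2)).mul (hvc.pow 2)
    · exact (continuousOn_id.pow 3).mul ((continuousOn_const.mul hvc).mul hdc)
  have hgc : ContinuousOn (fun t => t^2*(v t)^2 + t^2*(d t)^2) (Icc 0 1) := by
    apply ContinuousOn.add
    · exact (continuousOn_id.pow 2).mul (hvc.pow 2)
    · exact (continuousOn_id.pow 2).mul (hdc.pow 2)
  have hAc : ContinuousOn (fun t => t^2*(v t)^2) (Icc 0 1) :=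
    (continuousOn_id.pow 2).mul (hvc.pow 2)
  have hBc : ContinuousOn (fun t => t^2*(d t)^2) (Icc 0 1) :=
    (continuousOn_id.pow 2).mul (hdc.pow 2)
  -- integrability helpers
  have hint : ∀ (g : ℝ → ℝ), ContinuousOn g (Icc 0 1) → ∀ a b, a ∈ Icc (0:ℝ) 1 →
      b ∈ Icc (0:ℝ) 1 → IntervalIntegrable g volume a b := by
    intro g hg a b ha hb
    apply ContinuousOn.intervalIntegrable
    apply hg.mono
    exact uIcc_subset_Icc ha hb
  have h01 : (0:ℝ) ∈ Icc (0:ℝ) 1 := ⟨le_rfl, zero_le_one⟩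
  have h11 : (1:ℝ) ∈ Icc (0:ℝ) 1 := ⟨zero_le_one, le_rfl⟩
  have hxm : x ∈ Icc (0:ℝ) 1 := ⟨hx0, hx1⟩
  -- FTC 1 : on [x,1] with F t = t² v(t)²
  have key1 : (∫ t in x..1, (2*t*(v t)^2 + t^2*(2*(v t)*(d t))))
      = 1^2*(v 1)^2 - x^2*(v x)^2 := by
    apply intervalIntegral.integral_eq_sub_of_hasDeriv_right_of_le
      (f := fun t => t^2*(v t)^2) hx1
    · exact ((continuousOn_id.pow 2).mul ((hvc.mono hsub).pow 2))
    · intro t ht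
      have ht' : t ∈ Ioo (0:ℝ) 1 := ⟨lt_of_le_of_lt hx0 ht.1, ht.2⟩
      have h1 := hderiv t ht'
      have h2 : HasDerivAt (fun t => t^2 * (v t)^2) _ t := (hasDerivAt_pow 2 t).mul (h1.pow 2)
      have h3 : HasDerivAt (fun t => t^2 * (v t)^2)
          (2*t*(v t)^2 + t^2*(2*(v t)*(d t))) t := by
        convert h2 using 1
        push_cast [Pi.pow_apply]
        ring
      exact h3.hasDerivWithinAt
    · exact hint _ hg1c x 1 hxm h11
  -- FTC 2 : on [0,1] with G t = t³ v(t)²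
  have key2 : (∫ t in (0:ℝ)..1, (3*t^2*(v t)^2 + t^3*(2*(v t)*(d t))))
      = 1^3*(v 1)^2 - 0^3*(v 0)^2 := by
    apply intervalIntegral.integral_eq_sub_of_hasDeriv_right_of_le
      (f := fun t => t^3*(v t)^2) zero_le_one
    · exact ((continuousOn_id.pow 3).mul (hvc.pow 2))
    · intro t ht
      have h1 := hderiv t ht
      have h2 : HasDerivAt (fun t => t^3 * (v t)^2) _ t := (hasDerivAt_pow 3 t).mul (h1.pow 2)
      have h3 : HasDerivAt (fun t => t^3 * (v t)^2)
          (3*t^2*(v t)^2 + t^3*(2*(v t)*(d t))) t := by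
        convert h2 using 1
        push_cast [Pi.pow_apply]
        ring
      exact h3.hasDerivWithinAt
    · exact hint _ hg2c 0 1 h01 h11
  -- the sum integral equals A + B
  have hsum : (∫ t in (0:ℝ)..1, (t^2*(v t)^2 + t^2*(d t)^2)) = A + B := by
    rw [intervalIntegral.integral_add (hint _ hAc 0 1 h01 h11) (hint _ hBc 0 1 h01 h11)]
  -- Step 1 : v(1)² ≤ 4A + B
  have step1 : (v 1)^2 ≤ 4*A + B := by
    have hmono : (∫ t in (0:ℝ)..1, (3*t^2*(v t)^2 + t^3*(2*(v t)*(d t))))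
        ≤ ∫ t in (0:ℝ)..1, (4*(t^2*(v t)^2) + t^2*(d t)^2) := by
      apply intervalIntegral.integral_mono_on zero_le_one
        (hint _ hg2c 0 1 h01 h11)
      · apply IntervalIntegrable.add
        · exact (hint _ hAc 0 1 h01 h11).const_mul 4
        · exact hint _ hBc 0 1 h01 h11
      · intro t ht
        obtain ⟨ht0, ht1⟩ := ht
        nlinarith [sq_nonneg (v t - d t), sq_nonneg (v t + d t),
          mul_nonneg (mul_nonneg ht0 ht0) (mul_nonneg ht0 (sq_nonneg (v t - d t))),
          mul_nonneg (mul_nonneg ht0 ht0) (sq_nonneg (v t - d t)),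
          mul_nonneg (mul_nonneg (mul_nonneg ht0 ht0) (sub_nonneg.mpr ht1))
            (add_nonneg (sq_nonneg (v t)) (sq_nonneg (d t)))]
    have hsplit : (∫ t in (0:ℝ)..1, (4*(t^2*(v t)^2) + t^2*(d t)^2)) = 4*A + B := by
      rw [intervalIntegral.integral_add ((hint _ hAc 0 1 h01 h11).const_mul 4)
        (hint _ hBc 0 1 h01 h11), intervalIntegral.integral_const_mul]
    nlinarith [key2, hmono, hsplit]
  -- Step 2 : x² v(x)² ≤ v(1)² + (A + B)
  have step2 : x^2*(v x)^2 ≤ (v 1)^2 + (A + B) := by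
    have hmono : (∫ t in x..1, (-(t^2*(v t)^2 + t^2*(d t)^2)))
        ≤ ∫ t in x..1, (2*t*(v t)^2 + t^2*(2*(v t)*(d t))) := by
      apply intervalIntegral.integral_mono_on hx1
        (hint _ hgc.neg x 1 hxm h11)
        (hint _ hg1c x 1 hxm h11)
      intro t ht
      have ht0 : (0:ℝ) ≤ t := le_trans hx0 ht.1
      simp only [Pi.neg_apply]
      nlinarith [sq_nonneg (t*(v t) + t*(d t)), mul_nonneg ht0 (sq_nonneg (v t))]
    have hneg : (∫ t in x..1, (-(t^2*(v t)^2 + t^2*(d t)^2)))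
        = -(∫ t in x..1, (t^2*(v t)^2 + t^2*(d t)^2)) :=
      intervalIntegral.integral_neg
    have htail : (∫ t in x..1, (t^2*(v t)^2 + t^2*(d t)^2)) ≤ A + B := by
      have hadd : (∫ t in (0:ℝ)..x, (t^2*(v t)^2 + t^2*(d t)^2))
          + (∫ t in x..1, (t^2*(v t)^2 + t^2*(d t)^2))
          = ∫ t in (0:ℝ)..1, (t^2*(v t)^2 + t^2*(d t)^2) :=
        intervalIntegral.integral_add_adjacent_intervals
          (hint _ hgc 0 x h01 hxm) (hint _ hgc x 1 hxm h11)
      have hhead : 0 ≤ ∫ t in (0:ℝ)..x, (t^2*(v t)^2 + t^2*(d t)^2) := by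
        apply intervalIntegral.integral_nonneg hx0
        intro t _
        positivity
      rw [hsum] at hadd
      linarith
    nlinarith [key1, hmono, hneg, htail]
  -- nonnegativity
  have hBnn : 0 ≤ B := by
    rw [hB_def]
    apply intervalIntegral.integral_nonneg zero_le_one
    intro t _
    positivity
  have hAnn : 0 ≤ A := by
    rw [hA_def]
    apply intervalIntegral.integral_nonneg zero_le_one
    intro t _
    positivity
  -- conclude
  have hfinal : (x * v x)^2 ≤ 5 * (A + B) := by nlinarith [step1, step2]
  calc |x * v x| = Real.sqrt ((x * v x)^2) := (Real.sqrt_sq_eq_abs _).symm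
    _ ≤ Real.sqrt (5 * (A + B)) := Real.sqrt_le_sqrt hfinal
    _ = Real.sqrt 5 * Real.sqrt (A + B) := Real.sqrt_mul (by norm_num) _
end

section
/- On the weighted Sobolev space V, the quantity (‖v'‖₀² + v(1)²)^{1/2} defines a norm equivalent to ‖v‖₁; precisely, (2/3)‖v‖₁² ≤ v(1)² + ‖v'‖₀² ≤ 5‖v‖₁² for all v ∈ V. -/
open MeasureTheory Set

private lemma gkey (x : ℝ) (h0 : 0 ≤ x) (h1 : x ≤ 1) :
    (1:ℝ)/20 ≤ 33/400 + 33/100*x - 157/60*x^2 + 45/8*x^3 - 87/20*x^4 + 162/25*x^5 - 2187/400*x^6 := by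
  have hs : 0 ≤ 1 - x := by linarith
  nlinarith [mul_nonneg h0 hs, mul_nonneg (mul_nonneg h0 h0) hs,
    mul_nonneg (mul_nonneg (mul_nonneg h0 h0) h0) hs,
    mul_nonneg (mul_nonneg (mul_nonneg (mul_nonneg h0 h0) h0) h0) hs,
    mul_nonneg (mul_nonneg h0 h0) (mul_nonneg hs hs),
    sq_nonneg (x - 3/10), sq_nonneg (x^2 - 3/10*x), sq_nonneg (x^3 - 3/10*x^2),
    sq_nonneg (10*x^2-3*x), sq_nonneg (x*(1-x)), mul_nonneg h0 (mul_nonneg hs hs)]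

private lemma quad_nonneg (p q r a b : ℝ) (hp : 0 < p) (hd : q^2 ≤ p*r) :
    0 ≤ p*a^2 + 2*q*a*b + r*b^2 := by
  have h1 : 0 ≤ (p*a + q*b)^2 := sq_nonneg _
  have h2 : 0 ≤ (p*r - q^2) * b^2 := mul_nonneg (by linarith) (sq_nonneg b)
  nlinarith [mul_pos hp hp]

/-- pointwise lower bound : with `w x = (3/20)x + (3/10)x² - (4/5)x³ + (27/20)x⁴`,
`w' v² + 2 w v v' ≥ (2/3) x² v² - (1/3) x² v'²` on `[0,1]`. -/
private lemma pt_lower (x a b : ℝ) (h0 : 0 ≤ x) (h1 : x ≤ 1) :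
    (2/3)*(x^2*a^2) - (1/3)*(x^2*b^2) ≤
      (3/20 + 3/5*x - 12/5*x^2 + 27/5*x^3) * a^2
        + 2 * ((3/20)*x + (3/10)*x^2 - (4/5)*x^3 + (27/20)*x^4) * a * b := by
  have hg : (0:ℝ) ≤ 33/400 + 33/100*x - 157/60*x^2 + 45/8*x^3 - 87/20*x^4 + 162/25*x^5
      - 2187/400*x^6 := by linarith [gkey x h0 h1]
  have hp : (0:ℝ) < 3/20 + 3/5*x - 12/5*x^2 + 27/5*x^3 - (2/3)*x^2 := by
    nlinarith [gkey x h0 h1, sq_nonneg (3/20 + 3/10*x - 4/5*x^2 + 27/20*x^3)]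
  have hd : (x * (3/20 + 3/10*x - 4/5*x^2 + 27/20*x^3))^2 ≤
      (3/20 + 3/5*x - 12/5*x^2 + 27/5*x^3 - (2/3)*x^2) * ((1/3)*x^2) := by
    nlinarith [mul_nonneg (mul_nonneg h0 h0) hg]
  have h := quad_nonneg _ _ ((1/3)*x^2) a b hp hd
  nlinarith [h]

/-- pointwise upper bound with weight `x³`. -/
private lemma pt_upper (x a b : ℝ) (h0 : 0 ≤ x) (h1 : x ≤ 1) :
    3*x^2 * a^2 + 2 * x^3 * a * b ≤ 5*(x^2*a^2) + (1/2)*(x^2*b^2) := by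
  have hx2 : x^2 ≤ 1 := by nlinarith
  nlinarith [sq_nonneg (2*x*a - x^2*b),
    mul_nonneg (mul_nonneg (sq_nonneg x) (sub_nonneg.2 hx2)) (sq_nonneg b)]

/-- FTC for the weighted square: `∫₀¹ (w' v² + 2 w v v') = w(1) v(1)² - w(0) v(0)²`. -/
private lemma ftc_weight (v : ℝ → ℝ) (hv : ContDiffOn ℝ 1 v (Set.Icc 0 1))
    (w w' : ℝ → ℝ) (hw : ∀ x, HasDerivAt w (w' x) x) (hwc : Continuous w)
    (hw'c : Continuous w') (hw0 : w 0 = 0) :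
    ∫ x in (0:ℝ)..1,
        (w' x * v x ^ 2 + 2 * w x * v x * derivWithin v (Set.Icc 0 1) x)
      = w 1 * v 1 ^ 2 := by
  set K := derivWithin v (Set.Icc 0 1) with hK
  have hvc : ContinuousOn v (Icc 0 1) := hv.continuousOn
  have hKc : ContinuousOn K (Icc 0 1) :=
    hv.continuousOn_derivWithin (uniqueDiffOn_Icc one_pos) le_rfl
  have hgc : ContinuousOn (fun x => w' x * v x ^ 2 + 2 * w x * v x * K x) (Icc 0 1) :=
    ((hw'c.continuousOn).mul (hvc.pow 2)).add
      (((continuous_const.mul hwc).continuousOn.mul hvc).mul hKc)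
  have hFd : ∀ x ∈ Ioo (0:ℝ) 1,
      HasDerivWithinAt (fun x => w x * v x ^ 2)
        (w' x * v x ^ 2 + 2 * w x * v x * K x) (Ioi x) x := by
    intro x hx
    have hxI : Icc (0:ℝ) 1 ∈ nhds x := Icc_mem_nhds hx.1 hx.2
    have hvd : HasDerivAt v (K x) x :=
      (((hv.differentiableOn one_ne_zero) x (Ioo_subset_Icc_self hx)).hasDerivWithinAt).hasDerivAt hxI
    have h : HasDerivAt (fun x => w x * v x ^ 2)
        (w' x * v x ^ 2 + w x * (2 * v x ^ 1 * K x)) x :=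
      (hw x).mul (hvd.pow 2)
    refine HasDerivAt.hasDerivWithinAt ?_
    refine HasDerivAt.congr_deriv h ?_
    ring
  have h := intervalIntegral.integral_eq_sub_of_hasDeriv_right_of_le zero_le_one
    (ContinuousOn.mul (hwc.continuousOn) (hvc.pow 2)) hFd
    ((hgc.mono (by rw [uIcc_of_le zero_le_one])).intervalIntegrable)
  rw [h]
  show w 1 * v 1 ^ 2 - w 0 * v 0 ^ 2 = _
  rw [hw0]
  ring

/-- Remark 1: on `V`, `(‖v'‖₀² + v(1)²)^{1/2}` is a norm equivalent to `‖v‖₁`: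
`(2/3)‖v‖₁² ≤ v(1)² + ‖v'‖₀² ≤ 5‖v‖₁²`, with `‖v‖₁² = ‖v‖₀² + ‖v'‖₀²` and
`‖v‖₀² = ∫₀¹ x² v² dx`. -/
theorem equivalent_norms (v : ℝ → ℝ) (hv : ContDiffOn ℝ 1 v (Set.Icc 0 1)) :
    (2 / 3) * ((∫ x in (0:ℝ)..1, x ^ 2 * (v x) ^ 2)
        + ∫ x in (0:ℝ)..1, x ^ 2 * (derivWithin v (Set.Icc 0 1) x) ^ 2) ≤
      (v 1) ^ 2 + (∫ x in (0:ℝ)..1, x ^ 2 * (derivWithin v (Set.Icc 0 1) x) ^ 2) ∧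
    (v 1) ^ 2 + (∫ x in (0:ℝ)..1, x ^ 2 * (derivWithin v (Set.Icc 0 1) x) ^ 2) ≤
      5 * ((∫ x in (0:ℝ)..1, x ^ 2 * (v x) ^ 2)
        + ∫ x in (0:ℝ)..1, x ^ 2 * (derivWithin v (Set.Icc 0 1) x) ^ 2) := by
  set K := derivWithin v (Set.Icc 0 1) with hKdef
  have hvc : ContinuousOn v (Icc 0 1) := hv.continuousOn
  have hKc : ContinuousOn K (Icc 0 1) :=
    hv.continuousOn_derivWithin (uniqueDiffOn_Icc one_pos) le_rfl
  have hIcc : uIcc (0:ℝ) 1 = Icc 0 1 := uIcc_of_le zero_le_one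
  have hA : ContinuousOn (fun x : ℝ => x ^ 2 * v x ^ 2) (Icc 0 1) :=
    (continuousOn_pow 2).mul (hvc.pow 2)
  have hB : ContinuousOn (fun x : ℝ => x ^ 2 * K x ^ 2) (Icc 0 1) :=
    (continuousOn_pow 2).mul (hKc.pow 2)
  have hAi : IntervalIntegrable (fun x : ℝ => x ^ 2 * v x ^ 2) volume 0 1 :=
    (hA.mono (by rw [hIcc])).intervalIntegrable
  have hBi : IntervalIntegrable (fun x : ℝ => x ^ 2 * K x ^ 2) volume 0 1 :=
    (hB.mono (by rw [hIcc])).intervalIntegrable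
  set A := ∫ x in (0:ℝ)..1, x ^ 2 * (v x) ^ 2 with hAdef
  set B := ∫ x in (0:ℝ)..1, x ^ 2 * K x ^ 2 with hBdef
  have hAnn : 0 ≤ A := intervalIntegral.integral_nonneg zero_le_one
    (fun x _ => mul_nonneg (sq_nonneg x) (sq_nonneg _))
  have hBnn : 0 ≤ B := intervalIntegral.integral_nonneg zero_le_one
    (fun x _ => mul_nonneg (sq_nonneg x) (sq_nonneg _))
  constructor
  · -- lower bound, weight w = (3/20)x + (3/10)x² - (4/5)x³ + (27/20)x⁴
    have hder : ∀ x : ℝ, HasDerivAt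
        (fun x : ℝ => (3/20)*x + (3/10)*x^2 - (4/5)*x^3 + (27/20)*x^4)
        (3/20 + 3/5*x - 12/5*x^2 + 27/5*x^3) x := by
      intro x
      have h := (((hasDerivAt_id x).const_mul (3/20 : ℝ)).add
          ((hasDerivAt_pow 2 x).const_mul (3/10 : ℝ))).sub
          ((hasDerivAt_pow 3 x).const_mul (4/5 : ℝ)) |>.add
          ((hasDerivAt_pow 4 x).const_mul (27/20 : ℝ))
      refine HasDerivAt.congr_deriv h ?_
      push_cast; ring
    have hftc := ftc_weight v hv
      (fun x : ℝ => (3/20)*x + (3/10)*x^2 - (4/5)*x^3 + (27/20)*x^4)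
      (fun x : ℝ => 3/20 + 3/5*x - 12/5*x^2 + 27/5*x^3)
      hder (by fun_prop) (by fun_prop) (by norm_num)
    have hgi : IntervalIntegrable (fun x : ℝ =>
        (3/20 + 3/5*x - 12/5*x^2 + 27/5*x^3) * v x ^ 2
          + 2 * ((3/20)*x + (3/10)*x^2 - (4/5)*x^3 + (27/20)*x^4) * v x * K x) volume 0 1 := by
      refine ContinuousOn.intervalIntegrable ?_
      rw [hIcc]
      exact ((Continuous.continuousOn (by fun_prop)).mul (hvc.pow 2)).add
        (((Continuous.continuousOn (by fun_prop)).mul hvc).mul hKc)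
    have hmono : ∫ x in (0:ℝ)..1, ((2/3)*(x^2 * v x^2) - (1/3)*(x^2 * K x^2)) ≤
        ∫ x in (0:ℝ)..1,
          ((3/20 + 3/5*x - 12/5*x^2 + 27/5*x^3) * v x ^ 2
            + 2 * ((3/20)*x + (3/10)*x^2 - (4/5)*x^3 + (27/20)*x^4) * v x * K x) := by
      apply intervalIntegral.integral_mono_on zero_le_one
        ((hAi.const_mul _).sub (hBi.const_mul _)) hgi
      intro x hx
      exact pt_lower x (v x) (K x) hx.1 hx.2
    have hsplit : ∫ x in (0:ℝ)..1, ((2/3)*(x^2 * v x^2) - (1/3)*(x^2 * K x^2))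
        = (2/3)*A - (1/3)*B := by
      rw [intervalIntegral.integral_sub (hAi.const_mul _) (hBi.const_mul _),
        intervalIntegral.integral_const_mul, intervalIntegral.integral_const_mul]
    rw [hsplit, hftc] at hmono
    norm_num at hmono
    linarith
  · -- upper bound, weight w = x³
    have hder : ∀ x : ℝ, HasDerivAt (fun x : ℝ => x^3) (3*x^2) x := by
      intro x
      simpa using hasDerivAt_pow 3 x
    have hftc := ftc_weight v hv (fun x : ℝ => x^3) (fun x : ℝ => 3*x^2)
      hder (by fun_prop) (by fun_prop) (by norm_num)
    have hgi : IntervalIntegrable (fun x : ℝ =>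
        3*x^2 * v x ^ 2 + 2 * x^3 * v x * K x) volume 0 1 := by
      refine ContinuousOn.intervalIntegrable ?_
      rw [hIcc]
      exact ((Continuous.continuousOn (by fun_prop)).mul (hvc.pow 2)).add
        (((Continuous.continuousOn (by fun_prop)).mul hvc).mul hKc)
    have hmono : (∫ x in (0:ℝ)..1, (3*x^2 * v x ^ 2 + 2 * x^3 * v x * K x)) ≤
        ∫ x in (0:ℝ)..1, (5*(x^2 * v x^2) + (1/2)*(x^2 * K x^2)) := by
      apply intervalIntegral.integral_mono_on zero_le_one hgi
        ((hAi.const_mul _).add (hBi.const_mul _))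
      intro x hx
      exact pt_upper x (v x) (K x) hx.1 hx.2
    have hsplit : ∫ x in (0:ℝ)..1, (5*(x^2 * v x^2) + (1/2)*(x^2 * K x^2))
        = 5*A + (1/2)*B := by
      rw [intervalIntegral.integral_add (hAi.const_mul _) (hBi.const_mul _),
        intervalIntegral.integral_const_mul, intervalIntegral.integral_const_mul]
    rw [hsplit, hftc] at hmono
    norm_num at hmono
    linarith
end

section
/- Let C₁, C₂ > 0 and α = α(t,r) = 4(r − C₁t)√3 C₂ t with |α| ≤ 1, and define v_G(t,r) = (1/(4√3 C₂ t))[C₁ + (√3/(12t²C₂))(α + √(1−α) − √(1+α))] for t > 0. Then for all α ∈ [−1,1], √3(α + √(1−α) − √(1+α)) ≥ −√6; consequently v_G(t,r) > 0 whenever 12 C₁ C₂ t² ≥ √6. -/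
open Set

lemma key_elem (a : ℝ) (h1 : -1 ≤ a) (h2 : a ≤ 1) :
    -Real.sqrt 2 < a + Real.sqrt (1 - a) - Real.sqrt (1 + a) := by
  rcases le_or_gt 0 a with h | h
  · have hs2 : Real.sqrt (1 + a) ≤ Real.sqrt 2 := Real.sqrt_le_sqrt (by linarith)
    rcases eq_or_lt_of_le h with rfl | h'
    · have : Real.sqrt (1 - 0) = 1 := by norm_num
      have h2pos : 0 < Real.sqrt 2 := Real.sqrt_pos.mpr (by norm_num)
      linarith
    · have := Real.sqrt_nonneg (1 - a)
      have h2pos : 0 < Real.sqrt 2 := Real.sqrt_pos.mpr (by norm_num)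
      linarith
  · have hlt : Real.sqrt (1 + a) < Real.sqrt 2 :=
      Real.sqrt_lt_sqrt (by linarith) (by linarith)
    have h1' : (1 : ℝ) ≤ Real.sqrt (1 - a) := by
      nlinarith [Real.sq_sqrt (show (0:ℝ) ≤ 1 - a by linarith), Real.sqrt_nonneg (1 - a)]
    linarith

lemma key_sqrt3 (a : ℝ) (h1 : -1 ≤ a) (h2 : a ≤ 1) :
    -Real.sqrt 6 < Real.sqrt 3 * (a + Real.sqrt (1 - a) - Real.sqrt (1 + a)) := by
  have h3 : 0 < Real.sqrt 3 := Real.sqrt_pos.mpr (by norm_num)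
  have h62 : Real.sqrt 6 = Real.sqrt 3 * Real.sqrt 2 := by
    rw [show (6 : ℝ) = 3 * 2 by norm_num, Real.sqrt_mul (by norm_num)]
  have := mul_lt_mul_of_pos_left (key_elem a h1 h2) h3
  rw [mul_neg] at this
  linarith [this]

/-- For all `α ∈ [−1,1]`, `√3(α + √(1−α) − √(1+α)) ≥ −√6`; consequently the gas velocity
`v_G(t,r) = (1/(4√3 C₂ t))[C₁ + (√3/(12t²C₂))(α + √(1−α) − √(1+α))]`, with
`α = 4(r − C₁t)√3 C₂ t`, `|α| ≤ 1`, is positive whenever `12 C₁ C₂ t² ≥ √6`. -/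
theorem gas_velocity_positive (C₁ C₂ t r : ℝ) (hC₁ : 0 < C₁) (hC₂ : 0 < C₂) (ht : 0 < t)
    (hα : |4 * (r - C₁ * t) * Real.sqrt 3 * C₂ * t| ≤ 1) :
    (∀ a ∈ Set.Icc (-1 : ℝ) 1,
      -Real.sqrt 6 ≤ Real.sqrt 3 * (a + Real.sqrt (1 - a) - Real.sqrt (1 + a))) ∧
    (Real.sqrt 6 ≤ 12 * C₁ * C₂ * t ^ 2 →
      0 < (1 / (4 * Real.sqrt 3 * C₂ * t)) *
        (C₁ + (Real.sqrt 3 / (12 * t ^ 2 * C₂)) *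
          (4 * (r - C₁ * t) * Real.sqrt 3 * C₂ * t
            + Real.sqrt (1 - 4 * (r - C₁ * t) * Real.sqrt 3 * C₂ * t)
            - Real.sqrt (1 + 4 * (r - C₁ * t) * Real.sqrt 3 * C₂ * t)))) := by
  have h3 : 0 < Real.sqrt 3 := Real.sqrt_pos.mpr (by norm_num)
  constructor
  · intro a ha
    exact le_of_lt (key_sqrt3 a ha.1 ha.2)
  · intro hyp
    set α := 4 * (r - C₁ * t) * Real.sqrt 3 * C₂ * t with hαdef
    obtain ⟨hα1, hα2⟩ := abs_le.mp hα
    set E := α + Real.sqrt (1 - α) - Real.sqrt (1 + α) with hEdef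
    have hE : -Real.sqrt 6 < Real.sqrt 3 * E := key_sqrt3 α hα1 hα2
    have hD : 0 < 12 * t ^ 2 * C₂ := by positivity
    have hinner : 0 < C₁ + Real.sqrt 3 / (12 * t ^ 2 * C₂) * E := by
      have hdiv : -Real.sqrt 6 / (12 * t ^ 2 * C₂) < Real.sqrt 3 * E / (12 * t ^ 2 * C₂) :=
        by exact div_lt_div_of_pos_right hE hD
      have hC : Real.sqrt 6 / (12 * t ^ 2 * C₂) ≤ C₁ :=
        (div_le_iff₀ hD).mpr (by nlinarith)
      have heq : Real.sqrt 3 / (12 * t ^ 2 * C₂) * E = Real.sqrt 3 * E / (12 * t ^ 2 * C₂) := by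
        ring
      rw [heq]
      have : -Real.sqrt 6 / (12 * t ^ 2 * C₂) = -(Real.sqrt 6 / (12 * t ^ 2 * C₂)) := by ring
      rw [this] at hdiv
      linarith
    have hfac : 0 < 1 / (4 * Real.sqrt 3 * C₂ * t) := by positivity
    exact mul_pos hfac hinner
end
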